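/- For every fair-goods instance with n agents, there exists a connected allocation A that is MMS (v_i(A_i) >= MMS_i for every agent i) and has utilitarian welfare UW(A) >= 1/4. Consequently, since UW of any allocation is at most n under normalized valuations, the price of MMS with respect to utilitarian welfare for goods is at most 4n. -/

import Mathlib

open Finset

noncomputable section

/-- The value of a bundle `S` of items under additive (item-level) valuation `v`. -/
def bundleVal {m : ℕ} (v : Fin m → ℝ) (S : Finset (Fin m)) : ℝ := ∑ e ∈ S, v e

/-- A bundle is connected if it is an interval of the line `e_1, …, e_m`. -/
def IsConnBundle {m : ℕ} (S : Finset (Fin m)) : Prop :=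
  ∀ a ∈ S, ∀ c ∈ S, ∀ b : Fin m, a ≤ b → b ≤ c → b ∈ S

/-- A connected allocation: pairwise disjoint connected bundles covering all items. -/
def ConnAlloc (n m : ℕ) (A : Fin n → Finset (Fin m)) : Prop :=
  (∀ i, IsConnBundle (A i)) ∧
  (∀ i j : Fin n, i ≠ j → Disjoint (A i) (A j)) ∧
  (∀ e : Fin m, ∃ i, e ∈ A i)

/-- The maximin share of an agent with valuation `v`: the maximum over connected
`n`-partitions of the minimum bundle value. -/
def mmsVal (n m : ℕ) (v : Fin m → ℝ) : ℝ :=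
  sSup { x : ℝ | ∃ A : Fin n → Finset (Fin m), ConnAlloc n m A ∧ x = ⨅ j, bundleVal v (A j) }

/-- Utilitarian welfare of an allocation. -/
def utilW (n m : ℕ) (v : Fin n → Fin m → ℝ) (A : Fin n → Finset (Fin m)) : ℝ :=
  ∑ i, bundleVal (v i) (A i)

/-- Egalitarian welfare of an allocation. -/
def egalW (n m : ℕ) (v : Fin n → Fin m → ℝ) (A : Fin n → Finset (Fin m)) : ℝ :=
  ⨅ i, bundleVal (v i) (A i)

/-- Optimal utilitarian welfare over all connected allocations. -/
def optU (n m : ℕ) (v : Fin n → Fin m → ℝ) : ℝ :=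
  sSup { x : ℝ | ∃ A, ConnAlloc n m A ∧ x = utilW n m v A }

/-- Optimal egalitarian welfare over all connected allocations. -/
def optE (n m : ℕ) (v : Fin n → Fin m → ℝ) : ℝ :=
  sSup { x : ℝ | ∃ A, ConnAlloc n m A ∧ x = egalW n m v A }


namespace GoodsAux

open Classical in
/-- prefix sum of values of items with index < t -/
noncomputable def pref {m : ℕ} (v : Fin m → ℝ) (t : ℕ) : ℝ :=
  ∑ e ∈ Finset.univ.filter (fun e : Fin m => (e : ℕ) < t), v e

/-- interval bundle [a, b) -/
def iv (m a b : ℕ) : Finset (Fin m) :=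
  Finset.univ.filter (fun e : Fin m => a ≤ (e : ℕ) ∧ (e : ℕ) < b)

lemma mem_iv {m a b : ℕ} {e : Fin m} : e ∈ iv m a b ↔ a ≤ (e : ℕ) ∧ (e : ℕ) < b := by
  simp [iv]

lemma iv_conn {m a b : ℕ} : IsConnBundle (iv m a b) := by
  intro x hx y hy z hxz hzy
  rw [mem_iv] at *
  exact ⟨le_trans hx.1 hxz, lt_of_le_of_lt hzy hy.2⟩

lemma iv_subset {m : ℕ} {a b a' b' : ℕ} (h1 : a' ≤ a) (h2 : b ≤ b') :
    iv m a b ⊆ iv m a' b' := by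
  intro e he; rw [mem_iv] at *; omega

lemma iv_disjoint {m : ℕ} {a b a' b' : ℕ} (h : b ≤ a') :
    Disjoint (iv m a b) (iv m a' b') := by
  rw [Finset.disjoint_left]
  intro e he he'
  rw [mem_iv] at he he'
  omega

lemma iv_empty {m a b : ℕ} (h : b ≤ a) : iv m a b = ∅ := by
  ext e; rw [mem_iv]; simp; omega

lemma iv_zero_top {m : ℕ} : iv m 0 m = Finset.univ := by
  ext e; rw [mem_iv]; simp [e.isLt]

lemma pref_eq_bundleVal_iv {m : ℕ} (v : Fin m → ℝ) (t : ℕ) :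
    pref v t = bundleVal v (iv m 0 t) := by
  unfold pref bundleVal iv
  congr 1
  ext e; simp

lemma bundleVal_nonneg {m : ℕ} {v : Fin m → ℝ} (h : ∀ e, 0 ≤ v e) (S : Finset (Fin m)) :
    0 ≤ bundleVal v S := Finset.sum_nonneg (fun e _ => h e)

lemma bundleVal_mono {m : ℕ} {v : Fin m → ℝ} (h : ∀ e, 0 ≤ v e) {S T : Finset (Fin m)}
    (hST : S ⊆ T) : bundleVal v S ≤ bundleVal v T :=
  Finset.sum_le_sum_of_subset_of_nonneg hST (fun e _ _ => h e)

lemma bundleVal_iv {m : ℕ} (v : Fin m → ℝ) {a b : ℕ} (hab : a ≤ b) :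
    bundleVal v (iv m a b) = pref v b - pref v a := by
  have h1 : Finset.univ.filter (fun e : Fin m => (e : ℕ) < a) ⊆
      Finset.univ.filter (fun e : Fin m => (e : ℕ) < b) := by
    intro e he; simp at he ⊢; omega
  have h2 : iv m a b = Finset.univ.filter (fun e : Fin m => (e : ℕ) < b) \
      Finset.univ.filter (fun e : Fin m => (e : ℕ) < a) := by
    ext e; rw [mem_iv]; simp; omega
  rw [h2]
  unfold pref bundleVal
  exact Finset.sum_sdiff_eq_sub h1

lemma pref_mono {m : ℕ} {v : Fin m → ℝ} (h : ∀ e, 0 ≤ v e) {a b : ℕ} (hab : a ≤ b) :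
    pref v a ≤ pref v b := by
  have := bundleVal_nonneg h (iv m a b)
  rw [bundleVal_iv v hab] at this
  linarith

lemma pref_zero {m : ℕ} (v : Fin m → ℝ) : pref v 0 = 0 := by
  unfold pref
  rw [Finset.sum_eq_zero_iff_of_nonneg]
  · intro e he; simp at he
  · intro e he; simp at he

lemma pref_succ {m : ℕ} (v : Fin m → ℝ) (t : ℕ) (ht : t < m) :
    pref v (t + 1) = pref v t + v ⟨t, ht⟩ := by
  unfold pref
  have : Finset.univ.filter (fun e : Fin m => (e : ℕ) < t + 1) =
      insert (⟨t, ht⟩ : Fin m) (Finset.univ.filter (fun e : Fin m => (e : ℕ) < t)) := by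
    ext e
    simp only [Finset.mem_filter, Finset.mem_insert, Finset.mem_univ, true_and]
    constructor
    · intro h
      rcases Nat.lt_succ_iff_lt_or_eq.mp h with h' | h'
      · exact Or.inr h'
      · exact Or.inl (Fin.ext h')
    · rintro (rfl | h)
      · simp
      · omega
  rw [this, Finset.sum_insert (by simp)]
  ring

lemma pref_top {m : ℕ} (v : Fin m → ℝ) {t : ℕ} (h : m ≤ t) :
    pref v t = bundleVal v Finset.univ := by
  unfold pref bundleVal
  congr 1
  ext e; simp; exact lt_of_lt_of_le e.isLt h

lemma single_le_bundleVal {m : ℕ} {v : Fin m → ℝ} (h : ∀ e, 0 ≤ v e) {S : Finset (Fin m)}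
    {e : Fin m} (he : e ∈ S) : v e ≤ bundleVal v S :=
  Finset.single_le_sum (fun x _ => h x) he

end GoodsAux

namespace GoodsAux

/-- `canPack v τ t p`: we can fit `t` consecutive disjoint blocks, each of value ≥ τ,
within items [p, m). -/
def canPack {m : ℕ} (v : Fin m → ℝ) (τ : ℝ) : ℕ → ℕ → Prop
  | 0, _ => True
  | t + 1, p => ∃ q, p ≤ q ∧ q ≤ m ∧ τ ≤ pref v q - pref v p ∧ canPack v τ t q

lemma canPack_anti {m : ℕ} {v : Fin m → ℝ} (h0 : ∀ e, 0 ≤ v e) {τ : ℝ} :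
    ∀ (t : ℕ) {p p' : ℕ}, p' ≤ p → canPack v τ t p → canPack v τ t p' := by
  intro t
  cases t with
  | zero => intro p p' _ _; trivial
  | succ t =>
    intro p p' hpp h
    obtain ⟨q, hpq, hqm, hval, hrest⟩ := h
    exact ⟨q, le_trans hpp hpq, hqm, le_trans hval (by
      have := pref_mono h0 hpp; linarith), hrest⟩

lemma canPack_suffix_ge {m : ℕ} {v : Fin m → ℝ} (h0 : ∀ e, 0 ≤ v e) {τ : ℝ} {t p : ℕ}
    (ht : 1 ≤ t) (h : canPack v τ t p) : p ≤ m ∧ τ ≤ pref v m - pref v p := by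
  cases t with
  | zero => omega
  | succ t =>
    obtain ⟨q, hpq, hqm, hval, _⟩ := h
    refine ⟨le_trans hpq hqm, le_trans hval ?_⟩
    have := pref_mono h0 hqm
    linarith

open Classical in
/-- least end of a first block of value ≥ τ starting at p -/
noncomputable def firstCut {m : ℕ} (v : Fin m → ℝ) (τ : ℝ) (p : ℕ)
    (h : ∃ q, p ≤ q ∧ q ≤ m ∧ τ ≤ pref v q - pref v p) : ℕ :=
  Nat.find h

lemma firstCut_spec {m : ℕ} (v : Fin m → ℝ) (τ : ℝ) (p : ℕ)
    (h : ∃ q, p ≤ q ∧ q ≤ m ∧ τ ≤ pref v q - pref v p) :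
    p ≤ firstCut v τ p h ∧ firstCut v τ p h ≤ m ∧
      τ ≤ pref v (firstCut v τ p h) - pref v p := Nat.find_spec h

lemma firstCut_min {m : ℕ} (v : Fin m → ℝ) (τ : ℝ) (p : ℕ)
    (h : ∃ q, p ≤ q ∧ q ≤ m ∧ τ ≤ pref v q - pref v p)
    {q : ℕ} (hq : p ≤ q ∧ q ≤ m ∧ τ ≤ pref v q - pref v p) :
    firstCut v τ p h ≤ q := Nat.find_min' h hq

/-- from a `canPack (t+1) p` we get the least first-block cut, and packing survives
to the right of it (or anything ≤ it that is ≥ ... ). -/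
lemma canPack_step {m : ℕ} {v : Fin m → ℝ} (h0 : ∀ e, 0 ≤ v e) {τ : ℝ} {t p : ℕ}
    (h : canPack v τ (t + 1) p) :
    ∃ Q, p ≤ Q ∧ Q ≤ m ∧ τ ≤ pref v Q - pref v p ∧
      (∀ q', q' ≤ Q → canPack v τ t q') ∧
      (∀ q, p ≤ q → q ≤ m → τ ≤ pref v q - pref v p → Q ≤ q) := by
  obtain ⟨q, hpq, hqm, hval, hrest⟩ := h
  have hex : ∃ q', p ≤ q' ∧ q' ≤ m ∧ τ ≤ pref v q' - pref v p := ⟨q, hpq, hqm, hval⟩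
  obtain ⟨h1, h2, h3⟩ := firstCut_spec v τ p hex
  refine ⟨firstCut v τ p hex, h1, h2, h3, ?_, ?_⟩
  · intro q' hq'
    have hQq : firstCut v τ p hex ≤ q := firstCut_min v τ p hex ⟨hpq, hqm, hval⟩
    exact canPack_anti h0 t (le_trans hq' hQq) hrest
  · intro q hpq' hqm' hval'
    exact firstCut_min v τ p hex ⟨hpq', hqm', hval'⟩

lemma canPack_trivial {m : ℕ} {v : Fin m → ℝ} {τ : ℝ} (hτ : τ ≤ 0) :
    ∀ (t p : ℕ), p ≤ m → canPack v τ t p := by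
  intro t
  induction t with
  | zero => intro p _; trivial
  | succ t ih =>
    intro p hp
    exact ⟨p, le_refl p, hp, by simp [hτ], ih p hp⟩

end GoodsAux

namespace GoodsAux

lemma canPack_of_partition {n m : ℕ} (w : Fin m → ℝ) (h0 : ∀ e, 0 ≤ w e) (τ : ℝ) :
    ∀ (N : ℕ) (s : Finset (Fin n)) (A : Fin n → Finset (Fin m)) (p : ℕ),
      s.card = N → p ≤ m →
      (∀ i ∈ s, IsConnBundle (A i)) →
      (∀ i ∈ s, ∀ j ∈ s, i ≠ j → Disjoint (A i) (A j)) →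
      (∀ i ∈ s, ∀ e ∈ A i, p ≤ (e : ℕ)) →
      (∀ e : Fin m, p ≤ (e : ℕ) → ∃ i ∈ s, e ∈ A i) →
      (∀ i ∈ s, τ ≤ bundleVal w (A i)) →
      canPack w τ N p := by
  intro N
  induction N with
  | zero => intro s A p _ _ _ _ _ _ _; trivial
  | succ N ih =>
    intro s A p hcard hpm hconn hdisj hge hcover hval
    have hsne : s.Nonempty := Finset.card_pos.mp (by omega)
    by_cases hp : p < m
    · -- item at position p exists
      set ep : Fin m := ⟨p, hp⟩ with hep
      obtain ⟨i₀, hi₀s, hi₀⟩ := hcover ep (le_refl p)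
      have hAne : (A i₀).Nonempty := ⟨ep, hi₀⟩
      set M := (A i₀).max' hAne with hM
      have hMmem : M ∈ A i₀ := (A i₀).max'_mem hAne
      set b : ℕ := (M : ℕ) + 1 with hb
      have hbm : b ≤ m := M.isLt
      have hpb : p ≤ b := by
        have := hge i₀ hi₀s ep hi₀
        have h2 : (ep : ℕ) ≤ (M : ℕ) := Fin.le_def.mp ((A i₀).le_max' ep hi₀)
        omega
      have hA0 : A i₀ = iv m p b := by
        ext e
        rw [mem_iv]
        constructor
        · intro he
          refine ⟨hge i₀ hi₀s e he, ?_⟩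
          have := Fin.le_def.mp ((A i₀).le_max' e he)
          omega
        · rintro ⟨h1, h2⟩
          refine hconn i₀ hi₀s ep hi₀ M hMmem e ?_ ?_
          · exact Fin.le_def.mpr h1
          · exact Fin.le_def.mpr (by omega)
      -- other bundles live in [b, m)
      have hothers : ∀ j ∈ s.erase i₀, ∀ e ∈ A j, b ≤ (e : ℕ) := by
        intro j hj e he
        have hjs := Finset.mem_of_mem_erase hj
        have hne : j ≠ i₀ := Finset.ne_of_mem_erase hj
        by_contra hlt
        push_neg at hlt
        have : e ∈ A i₀ := by
          rw [hA0, mem_iv]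
          exact ⟨hge j hjs e he, hlt⟩
        exact (Finset.disjoint_left.mp (hdisj j hjs i₀ hi₀s hne) he) this
      have hcover' : ∀ e : Fin m, b ≤ (e : ℕ) → ∃ i ∈ s.erase i₀, e ∈ A i := by
        intro e heb
        obtain ⟨i, his, hei⟩ := hcover e (le_trans hpb heb)
        refine ⟨i, ?_, hei⟩
        rcases eq_or_ne i i₀ with rfl | hne
        · exfalso
          rw [hA0, mem_iv] at hei
          omega
        · exact Finset.mem_erase.mpr ⟨hne, his⟩
      have hrest : canPack w τ N b := by
        refine ih (s.erase i₀) A b ?_ hbm ?_ ?_ hothers hcover' ?_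
        · rw [Finset.card_erase_of_mem hi₀s, hcard]; omega
        · intro i hi; exact hconn i (Finset.mem_of_mem_erase hi)
        · intro i hi j hj
          exact hdisj i (Finset.mem_of_mem_erase hi) j (Finset.mem_of_mem_erase hj)
        · intro i hi; exact hval i (Finset.mem_of_mem_erase hi)
      refine ⟨b, hpb, hbm, ?_, hrest⟩
      have := hval i₀ hi₀s
      rw [hA0, bundleVal_iv w hpb] at this
      exact this
    · -- p = m: every bundle in s is empty, τ ≤ 0
      push_neg at hp
      obtain ⟨i, his⟩ := hsne
      have hempty : A i = ∅ := by
        rw [Finset.eq_empty_iff_forall_notMem]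
        intro e he
        have := hge i his e he
        have := e.isLt
        omega
      have hτ : τ ≤ 0 := by
        have := hval i his
        rw [hempty] at this
        simpa [bundleVal] using this
      exact canPack_trivial hτ _ p hpm

/-- the set defining mmsVal -/
def mmsSet (n m : ℕ) (w : Fin m → ℝ) : Set ℝ :=
  { x : ℝ | ∃ A : Fin n → Finset (Fin m), ConnAlloc n m A ∧ x = ⨅ j, bundleVal w (A j) }

lemma mmsVal_eq_sSup (n m : ℕ) (w : Fin m → ℝ) : mmsVal n m w = sSup (mmsSet n m w) := rfl

/-- trivial allocation: one agent gets everything -/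
def trivAlloc (n m : ℕ) (hn : 1 ≤ n) : Fin n → Finset (Fin m) :=
  fun i => if i = ⟨0, hn⟩ then Finset.univ else ∅

lemma trivAlloc_conn (n m : ℕ) (hn : 1 ≤ n) : ConnAlloc n m (trivAlloc n m hn) := by
  refine ⟨?_, ?_, ?_⟩
  · intro i
    unfold trivAlloc
    split
    · intro a _ c _ b _ _; exact Finset.mem_univ b
    · intro a ha; simp at ha
  · intro i j hij
    unfold trivAlloc
    split <;> split
    · exfalso; apply hij; omega
    · exact Finset.disjoint_empty_right _
    · exact Finset.disjoint_empty_left _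
    · exact Finset.disjoint_empty_left _
  · intro e
    exact ⟨⟨0, hn⟩, by simp [trivAlloc]⟩

lemma mmsSet_nonempty (n m : ℕ) (hn : 1 ≤ n) (w : Fin m → ℝ) : (mmsSet n m w).Nonempty :=
  ⟨_, trivAlloc n m hn, trivAlloc_conn n m hn, rfl⟩

lemma mmsSet_finite (n m : ℕ) (w : Fin m → ℝ) : (mmsSet n m w).Finite := by
  have : mmsSet n m w ⊆ (fun A : Fin n → Finset (Fin m) => ⨅ j, bundleVal w (A j)) ''
      Set.univ := by
    rintro x ⟨A, _, rfl⟩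
    exact ⟨A, Set.mem_univ A, rfl⟩
  exact Set.Finite.subset (Set.finite_univ.image _) this

lemma le_mmsVal (n m : ℕ) (w : Fin m → ℝ) {A : Fin n → Finset (Fin m)}
    (hA : ConnAlloc n m A) : (⨅ j, bundleVal w (A j)) ≤ mmsVal n m w :=
  le_csSup (mmsSet_finite n m w).bddAbove ⟨A, hA, rfl⟩

lemma mmsVal_nonneg (n m : ℕ) (hn : 1 ≤ n) (w : Fin m → ℝ) (h0 : ∀ e, 0 ≤ w e) :
    0 ≤ mmsVal n m w := by
  haveI : Nonempty (Fin n) := ⟨⟨0, hn⟩⟩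
  refine le_trans ?_ (le_mmsVal n m w (trivAlloc_conn n m hn))
  exact le_ciInf (fun j => bundleVal_nonneg h0 _)

lemma canPack_mms (n m : ℕ) (hn : 1 ≤ n) (w : Fin m → ℝ) (h0 : ∀ e, 0 ≤ w e) :
    canPack w (mmsVal n m w) n 0 := by
  haveI : Nonempty (Fin n) := ⟨⟨0, hn⟩⟩
  have hmem : mmsVal n m w ∈ mmsSet n m w :=
    (mmsSet_nonempty n m hn w).csSup_mem (mmsSet_finite n m w)
  obtain ⟨A, hA, hx⟩ := hmem
  obtain ⟨hconn, hdisj, hcover⟩ := hA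
  refine canPack_of_partition w h0 (mmsVal n m w) n Finset.univ A 0 (by simp) (by omega)
    (fun i _ => hconn i) (fun i _ j _ hij => hdisj i j hij) (fun i _ e _ => Nat.zero_le _)
    (fun e _ => by obtain ⟨i, hi⟩ := hcover e; exact ⟨i, Finset.mem_univ i, hi⟩) ?_
  intro i _
  rw [hx]
  exact ciInf_le (Set.Finite.bddBelow (Set.finite_range _)) i

end GoodsAux

namespace GoodsAux

open Classical in
/-- the maximum total value of a set of at most `k` items -/
noncomputable def topSum {m : ℕ} (w : Fin m → ℝ) (k : ℕ) : ℝ :=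
  (Finset.univ.powerset.filter (fun T : Finset (Fin m) => T.card ≤ k)).sup'
    ⟨∅, by simp⟩ (fun T => bundleVal w T)

lemma le_topSum {m : ℕ} (w : Fin m → ℝ) (k : ℕ) {T : Finset (Fin m)} (hT : T.card ≤ k) :
    bundleVal w T ≤ topSum w k := by
  classical
  exact Finset.le_sup' (f := fun T => bundleVal w T)
    (by simp [Finset.mem_filter, Finset.mem_powerset, hT] : T ∈ _)

lemma topSum_attained {m : ℕ} (w : Fin m → ℝ) (k : ℕ) :
    ∃ T : Finset (Fin m), T.card ≤ k ∧ topSum w k = bundleVal w T := by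
  classical
  obtain ⟨T, hT, h⟩ := Finset.exists_mem_eq_sup'
    (⟨∅, by simp⟩ : (Finset.univ.powerset.filter
      (fun T : Finset (Fin m) => T.card ≤ k)).Nonempty) (fun T => bundleVal w T)
  simp only [Finset.mem_filter, Finset.mem_powerset] at hT
  exact ⟨T, hT.2, h⟩

lemma topSum_nonneg {m : ℕ} {w : Fin m → ℝ} (h0 : ∀ e, 0 ≤ w e) (k : ℕ) :
    0 ≤ topSum w k := by
  refine le_trans ?_ (le_topSum w k (T := ∅) (by simp))
  simp [bundleVal]

/-- Greedy threshold-partition: cuts of [p, m) into t parts, each of value ≥ θ,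
provided the mass minus any (t-1) items is at least t·θ. -/
lemma exists_cuts {m : ℕ} (w : Fin m → ℝ) (h0 : ∀ e, 0 ≤ w e) :
    ∀ (t : ℕ), 1 ≤ t → ∀ (p : ℕ), p ≤ m → ∀ (θ : ℝ),
    (∀ T : Finset (Fin m), (∀ e ∈ T, p ≤ (e : ℕ)) → T.card + 1 ≤ t →
      bundleVal w T + t * θ ≤ pref w m - pref w p) →
    ∃ c : ℕ → ℕ, c 0 = p ∧ c t = m ∧ (∀ k, c k ≤ m) ∧
      (∀ k, k < t → c k ≤ c (k + 1) ∧ θ ≤ pref w (c (k + 1)) - pref w (c k)) := by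
  intro t
  induction t with
  | zero => intro h; omega
  | succ t ih =>
    intro _ p hp θ hyp
    by_cases hθ : θ ≤ 0
    · -- trivial: all cuts at p except final at m
      refine ⟨fun k => if k < t + 1 then p else m, ?_, ?_, ?_, ?_⟩
      · simp
      · simp
      · intro k
        by_cases h : k < t + 1 <;> simp [h, hp]
      · intro k hk
        have h1 : (if k < t + 1 then p else m) = p := if_pos hk
        constructor
        · show (if k < t + 1 then p else m) ≤ (if k + 1 < t + 1 then p else m)
          rw [h1]
          by_cases h : k + 1 < t + 1 <;> simp [h, hp]
        · show θ ≤ pref w (if k + 1 < t + 1 then p else m) - pref w (if k < t + 1 then p else m)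
          rw [h1]
          by_cases h : k + 1 < t + 1
          · rw [if_pos h]; simp [hθ]
          · rw [if_neg h]
            have := pref_mono h0 hp
            linarith
    · push_neg at hθ
      -- first block exists: the whole suffix has value ≥ (t+1)θ ≥ θ
      have htot : ((t : ℝ) + 1) * θ ≤ pref w m - pref w p := by
        have := hyp ∅ (by simp) (by simp)
        rw [show bundleVal w (∅ : Finset (Fin m)) = 0 from rfl] at this
        push_cast at this
        linarith
      have hθle : θ ≤ pref w m - pref w p := by
        nlinarith [hθ, Nat.cast_nonneg (α := ℝ) t]
      have hex : ∃ q, p ≤ q ∧ q ≤ m ∧ θ ≤ pref w q - pref w p := ⟨m, hp, le_refl m, hθle⟩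
      obtain ⟨hpQ, hQm, hQval⟩ := firstCut_spec w θ p hex
      set Q := firstCut w θ p hex with hQdef
      have hQgt : p < Q := by
        rcases Nat.lt_or_ge p Q with h | h
        · exact h
        · exfalso
          have hQp : Q = p := le_antisymm h hpQ
          rw [hQp] at hQval
          simp at hQval
          linarith
      have hQ1m : Q - 1 < m := by omega
      set d : ℝ := w ⟨Q - 1, hQ1m⟩ with hd
      have hQprev : pref w (Q - 1) - pref w p < θ := by
        by_contra hcon
        push_neg at hcon
        have := firstCut_min w θ p hex (q := Q - 1) ⟨by omega, by omega, hcon⟩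
        omega
      have hQsucc : pref w Q = pref w (Q - 1) + d := by
        have hQQ : Q - 1 + 1 = Q := by omega
        rw [← hQQ]
        exact pref_succ w (Q - 1) hQ1m
      have hblock : pref w Q - pref w p < θ + d := by
        rw [hQsucc]; linarith
      rcases Nat.eq_zero_or_pos t with rfl | ht1
      · -- single part: [p, m)
        refine ⟨fun k => if k = 0 then p else m, ?_, ?_, ?_, ?_⟩
        · simp
        · simp
        · intro k
          by_cases h : k = 0 <;> simp [h, hp]
        · intro k hk
          have hk0 : k = 0 := by omega
          subst hk0
          constructor
          · show (if (0:ℕ) = 0 then p else m) ≤ (if (0:ℕ) + 1 = 0 then p else m)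
            simp [hp]
          · show θ ≤ pref w (if (0:ℕ) + 1 = 0 then p else m) - pref w (if (0:ℕ) = 0 then p else m)
            simpa using hθle
      · have ihyp : ∀ T : Finset (Fin m), (∀ e ∈ T, Q ≤ (e : ℕ)) → T.card + 1 ≤ t →
            bundleVal w T + t * θ ≤ pref w m - pref w Q := by
          intro T hTQ hTc
          have heQ : (⟨Q - 1, hQ1m⟩ : Fin m) ∉ T := by
            intro hmem
            have := hTQ _ hmem
            simp at this
            omega
          have hins := hyp (insert ⟨Q - 1, hQ1m⟩ T)
            (by
              intro e he
              rcases Finset.mem_insert.mp he with rfl | he'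
              · simp; omega
              · have := hTQ e he'; omega)
            (by rw [Finset.card_insert_of_notMem heQ]; omega)
          rw [show bundleVal w (insert ⟨Q - 1, hQ1m⟩ T) = d + bundleVal w T by
            unfold bundleVal; rw [Finset.sum_insert heQ]] at hins
          push_cast at hins
          nlinarith [hins, hblock]
        obtain ⟨c', hc'0, hc't, hc'm, hc'blk⟩ := ih ht1 Q hQm θ ihyp
        refine ⟨fun k => if k = 0 then p else c' (k - 1), ?_, ?_, ?_, ?_⟩
        · simp
        · simp [hc't]
        · intro k
          by_cases h : k = 0 <;> simp [h, hp, hc'm]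
        · intro k hk
          rcases Nat.eq_zero_or_pos k with rfl | hk1
          · constructor
            · show (if (0:ℕ) = 0 then p else c' (0 - 1)) ≤ (if (0:ℕ) + 1 = 0 then p else c' (0 + 1 - 1))
              simp only [if_pos rfl, if_neg (by omega : (0:ℕ) + 1 ≠ 0)]
              simpa [hc'0] using hpQ
            · show θ ≤ pref w (if (0:ℕ) + 1 = 0 then p else c' (0 + 1 - 1)) -
                  pref w (if (0:ℕ) = 0 then p else c' (0 - 1))
              simpa [hc'0] using hQval
          · have hk0 : k ≠ 0 := by omega
            have h1 : (if k = 0 then p else c' (k - 1)) = c' (k - 1) := if_neg hk0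
            have h2 : (if k + 1 = 0 then p else c' (k + 1 - 1)) = c' k := by
              rw [if_neg (by omega : k + 1 ≠ 0)]
              congr 1
            have hblk := hc'blk (k - 1) (by omega)
            have hkk : k - 1 + 1 = k := by omega
            rw [hkk] at hblk
            constructor
            · show (if k = 0 then p else c' (k - 1)) ≤ (if k + 1 = 0 then p else c' (k + 1 - 1))
              rw [h1, h2]; exact hblk.1
            · show θ ≤ pref w (if k + 1 = 0 then p else c' (k + 1 - 1)) -
                  pref w (if k = 0 then p else c' (k - 1))
              rw [h1, h2]; exact hblk.2

end GoodsAux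

namespace GoodsAux

lemma cuts_mono_chain {c : ℕ → ℕ} {n : ℕ} (hmono : ∀ k, k < n → c k ≤ c (k + 1)) :
    ∀ a b, a ≤ b → b ≤ n → c a ≤ c b := by
  intro a b hab hbn
  induction b with
  | zero =>
    have : a = 0 := by omega
    subst this; exact le_refl _
  | succ b ihb =>
    rcases Nat.lt_or_ge a (b + 1) with h | h
    · have h1 : c a ≤ c b := ihb (by omega) (by omega)
      exact le_trans h1 (hmono b (by omega))
    · have : a = b + 1 := by omega
      subst this; exact le_refl _

lemma alloc_of_cuts {n m : ℕ} (c : ℕ → ℕ) (hc0 : c 0 = 0) (hcn : c n = m)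
    (hmono : ∀ k, k < n → c k ≤ c (k + 1)) :
    ConnAlloc n m (fun i : Fin n => iv m (c i) (c ((i : ℕ) + 1))) := by
  refine ⟨fun i => iv_conn, ?_, ?_⟩
  · intro i j hij
    rcases Nat.lt_or_ge (i : ℕ) (j : ℕ) with h | h
    · exact iv_disjoint (cuts_mono_chain hmono ((i : ℕ) + 1) (j : ℕ) (by omega) (by
        exact le_of_lt j.isLt))
    · have h' : (j : ℕ) < (i : ℕ) := by
        rcases Nat.lt_or_ge (j : ℕ) (i : ℕ) with h2 | h2
        · exact h2
        · exfalso; exact hij (Fin.ext (by omega))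
      exact (iv_disjoint (cuts_mono_chain hmono ((j : ℕ) + 1) (i : ℕ) (by omega)
        (le_of_lt i.isLt))).symm
  · intro e
    set P : ℕ → Prop := fun k => c k ≤ (e : ℕ) with hP
    have hP0 : P 0 := by simp [hP, hc0]
    have hfg : P (Nat.findGreatest P n) := Nat.findGreatest_spec (Nat.zero_le n) hP0
    have hfgle : Nat.findGreatest P n ≤ n := Nat.findGreatest_le n
    have hlt : Nat.findGreatest P n < n := by
      rcases Nat.lt_or_ge (Nat.findGreatest P n) n with h | h
      · exact h
      · exfalso
        have heq : Nat.findGreatest P n = n := by omega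
        rw [heq] at hfg
        simp only [hP] at hfg
        rw [hcn] at hfg
        have := e.isLt
        omega
    have hnot : ¬ P (Nat.findGreatest P n + 1) :=
      Nat.findGreatest_is_greatest (Nat.lt_succ_self _) (by omega)
    refine ⟨⟨Nat.findGreatest P n, hlt⟩, ?_⟩
    rw [mem_iv]
    constructor
    · exact hfg
    · simp only [hP, not_le] at hnot
      exact hnot

/-- Key lower bound on the MMS value: removing the n-1 largest items, the rest is
spreadable. -/
lemma one_le_topSum_add_mms (n m : ℕ) (hn : 1 ≤ n) (w : Fin m → ℝ) (h0 : ∀ e, 0 ≤ w e)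
    (hnorm : bundleVal w Finset.univ = 1) :
    (1 : ℝ) ≤ topSum w (n - 1) + n * mmsVal n m w := by
  haveI : Nonempty (Fin n) := ⟨⟨0, hn⟩⟩
  set θ : ℝ := (1 - topSum w (n - 1)) / n with hθdef
  have hn0 : (0 : ℝ) < n := by exact_mod_cast hn
  have hnθ : (n : ℝ) * θ = 1 - topSum w (n - 1) := by
    rw [hθdef]; field_simp
  have hyp : ∀ T : Finset (Fin m), (∀ e ∈ T, 0 ≤ (e : ℕ)) → T.card + 1 ≤ n →
      bundleVal w T + n * θ ≤ pref w m - pref w 0 := by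
    intro T _ hTc
    rw [pref_zero, pref_top w (le_refl m), hnorm, hnθ]
    have := le_topSum w (n - 1) (T := T) (by omega)
    linarith
  obtain ⟨c, hc0, hcn, hcm, hcblk⟩ := exists_cuts w h0 n hn 0 (Nat.zero_le m) θ hyp
  have hA := alloc_of_cuts (n := n) (m := m) c hc0 hcn (fun k hk => (hcblk k hk).1)
  have hle : θ ≤ mmsVal n m w := by
    refine le_trans ?_ (le_mmsVal n m w hA)
    refine le_ciInf (fun j => ?_)
    rw [bundleVal_iv w ((hcblk (j : ℕ) j.isLt).1)]
    exact (hcblk (j : ℕ) j.isLt).2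
  nlinarith [hle, hn0, hnθ]

end GoodsAux

namespace GoodsAux

open Classical

/-- The main constructive allocation lemma: serve the agents in `S` bundles of value
≥ μ, and give each owner in `P` a bundle containing its reserved item, covering the
suffix [p, m) with connected disjoint bundles. -/
lemma feed {n m : ℕ} (v : Fin n → Fin m → ℝ) (hpos : ∀ i e, 0 ≤ v i e) (μ : Fin n → ℝ) :
    ∀ (N : ℕ) (S : Finset (Fin n)) (P : Finset (Fin n × Fin m)) (p : ℕ),
    S.card + P.card = N + 1 →
    p ≤ m →
    (∀ pr ∈ P, pr.1 ∉ S) →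
    (∀ pr ∈ P, ∀ pr' ∈ P, pr ≠ pr' → pr.1 ≠ pr'.1 ∧ pr.2 ≠ pr'.2) →
    (∀ pr ∈ P, p ≤ ((pr.2 : Fin m) : ℕ)) →
    (∀ j ∈ S, canPack (v j) (μ j) (N + 1) p) →
    ∃ B : Fin n → Finset (Fin m),
      (∀ i, IsConnBundle (B i)) ∧
      (∀ i j, i ≠ j → Disjoint (B i) (B j)) ∧
      (∀ i, ∀ e ∈ B i, p ≤ (e : ℕ)) ∧
      (∀ e : Fin m, p ≤ (e : ℕ) → ∃ i, e ∈ B i) ∧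
      (∀ j ∈ S, μ j ≤ bundleVal (v j) (B j)) ∧
      (∀ pr ∈ P, pr.2 ∈ B pr.1) ∧
      (∀ i, i ∉ S → (∀ pr ∈ P, pr.1 ≠ i) → B i = ∅) := by
  intro N
  induction N with
  | zero =>
    -- exactly one agent: it takes the whole suffix [p, m)
    intro S P p hcard hpm hSP hdist hitems hpack
    have h1 : S.card + P.card = 1 := hcard
    -- identify the unique agent a
    obtain ⟨a, ha⟩ : ∃ a : Fin n, (S = {a} ∧ P = ∅) ∨ (S = ∅ ∧ ∃ e, P = {(a, e)}) := by
      rcases Nat.add_eq_one_iff.mp h1 with ⟨hS0, hP1⟩ | ⟨hS1, hP0⟩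
      · obtain ⟨pr, hpr⟩ := Finset.card_eq_one.mp hP1
        exact ⟨pr.1, Or.inr ⟨Finset.card_eq_zero.mp hS0, pr.2, by rw [hpr]⟩⟩
      · obtain ⟨a, ha⟩ := Finset.card_eq_one.mp hS1
        exact ⟨a, Or.inl ⟨ha, Finset.card_eq_zero.mp hP0⟩⟩
    refine ⟨fun i => if i = a then iv m p m else ∅, ?_, ?_, ?_, ?_, ?_, ?_, ?_⟩
    · intro i
      by_cases h : i = a <;> simp [h, iv_conn]
      intro x hx; simp at hx
    · intro i j hij
      by_cases hi : i = a <;> by_cases hj : j = a <;> simp [hi, hj]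
      · exact absurd (hi.trans hj.symm) hij
    · intro i e he
      dsimp only at he
      by_cases h : i = a
      · rw [if_pos h] at he; exact (mem_iv.mp he).1
      · rw [if_neg h] at he; simp at he
    · intro e he
      refine ⟨a, ?_⟩
      dsimp only
      rw [if_pos rfl, mem_iv]
      exact ⟨he, e.isLt⟩
    · intro j hj
      dsimp only
      rcases ha with ⟨hS, hP⟩ | ⟨hS, hP⟩
      · have hja : j = a := Finset.mem_singleton.mp (hS ▸ hj)
        rw [if_pos hja, hja]
        have := hpack j hj
        obtain ⟨q, hpq, hqm, hval, _⟩ := this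
        rw [bundleVal_iv _ hpm]
        have := pref_mono (fun e => hpos j e) hqm
        rw [hja] at *
        linarith
      · rw [hS] at hj; simp at hj
    · intro pr hpr
      dsimp only
      rcases ha with ⟨hS, hP⟩ | ⟨hS, ⟨e, hP⟩⟩
      · rw [hP] at hpr; simp at hpr
      · rw [hP] at hpr
        have : pr = (a, e) := Finset.mem_singleton.mp hpr
        subst this
        rw [if_pos rfl, mem_iv]
        exact ⟨hitems _ (by rw [hP]; exact Finset.mem_singleton_self _), (e : Fin m).isLt⟩
    · intro i hiS hiP
      dsimp only
      rw [if_neg ?_]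
      rcases ha with ⟨hS, hP⟩ | ⟨hS, ⟨e, hP⟩⟩
      · intro h; rw [h, hS] at hiS; simp at hiS
      · intro h
        exact hiP (a, e) (by rw [hP]; exact Finset.mem_singleton_self _) (by rw [h])
  | succ N ih =>
    intro S P p hcard hpm hSP hdist hitems hpack
    -- helper: serve agent `a` the interval [p, q), recurse beyond q
    have assemble : ∀ (a : Fin n) (q : ℕ) (S' : Finset (Fin n))
        (P' : Finset (Fin n × Fin m)),
        p ≤ q → q ≤ m →
        a ∉ S' → (∀ pr ∈ P', pr.1 ≠ a) →
        S'.card + P'.card = N + 1 →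
        (∀ pr ∈ P', pr.1 ∉ S') →
        (∀ pr ∈ P', ∀ pr' ∈ P', pr ≠ pr' → pr.1 ≠ pr'.1 ∧ pr.2 ≠ pr'.2) →
        (∀ pr ∈ P', q ≤ ((pr.2 : Fin m) : ℕ)) →
        (∀ j ∈ S', canPack (v j) (μ j) (N + 1) q) →
        ∃ B : Fin n → Finset (Fin m),
          (∀ i, IsConnBundle (B i)) ∧
          (∀ i j, i ≠ j → Disjoint (B i) (B j)) ∧
          (∀ i, ∀ e ∈ B i, p ≤ (e : ℕ)) ∧
          (∀ e : Fin m, p ≤ (e : ℕ) → ∃ i, e ∈ B i) ∧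
          (∀ j ∈ S', μ j ≤ bundleVal (v j) (B j)) ∧
          (∀ pr ∈ P', pr.2 ∈ B pr.1) ∧
          (B a = iv m p q) ∧
          (∀ i, i ≠ a → i ∉ S' → (∀ pr ∈ P', pr.1 ≠ i) → B i = ∅) := by
      intro a q S' P' hpq hqm haS' haP' hcard' hSP' hdist' hitems' hpack'
      obtain ⟨B', hc1, hc2, hc3, hc4, hc5, hc6, hc7⟩ :=
        ih S' P' q hcard' hqm hSP' hdist' hitems' hpack'
      have hB'a : B' a = ∅ := hc7 a haS' haP'
      refine ⟨Function.update B' a (iv m p q), ?_, ?_, ?_, ?_, ?_, ?_, ?_, ?_⟩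
      · intro i
        by_cases h : i = a
        · rw [h, Function.update_self]; exact iv_conn
        · rw [Function.update_of_ne h]; exact hc1 i
      · intro i j hij
        by_cases hi : i = a <;> by_cases hj : j = a
        · exact absurd (hi.trans hj.symm) hij
        · rw [hi, Function.update_self, Function.update_of_ne hj]
          rw [Finset.disjoint_left]
          intro e he he'
          have := (mem_iv.mp he).2
          have := hc3 j e he'
          omega
        · rw [hj, Function.update_self, Function.update_of_ne hi]
          rw [Finset.disjoint_right]
          intro e he he'
          have := (mem_iv.mp he).2
          have := hc3 i e he'
          omega
        · rw [Function.update_of_ne hi, Function.update_of_ne hj]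
          exact hc2 i j hij
      · intro i e he
        by_cases h : i = a
        · rw [h, Function.update_self] at he
          exact (mem_iv.mp he).1
        · rw [Function.update_of_ne h] at he
          exact le_trans hpq (hc3 i e he)
      · intro e he
        rcases Nat.lt_or_ge (e : ℕ) q with h | h
        · exact ⟨a, by rw [Function.update_self, mem_iv]; exact ⟨he, h⟩⟩
        · obtain ⟨i, hi⟩ := hc4 e h
          refine ⟨i, ?_⟩
          by_cases hia : i = a
          · rw [hia, hB'a] at hi; simp at hi
          · rw [Function.update_of_ne hia]; exact hi
      · intro j hj
        have hja : j ≠ a := fun h => haS' (h ▸ hj)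
        rw [Function.update_of_ne hja]
        exact hc5 j hj
      · intro pr hpr
        have : pr.1 ≠ a := haP' pr hpr
        rw [Function.update_of_ne this]
        exact hc6 pr hpr
      · exact Function.update_self a _ B'
      · intro i hia hiS hiP
        rw [Function.update_of_ne hia]
        exact hc7 i hiS hiP
    by_cases hS : S.Nonempty
    · -- compute the minimal first-block cut over S
      have hQex : ∀ j ∈ S, ∃ Qj, p ≤ Qj ∧ Qj ≤ m ∧ μ j ≤ pref (v j) Qj - pref (v j) p ∧
          (∀ q', q' ≤ Qj → canPack (v j) (μ j) (N + 1) q') ∧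
          (∀ q, p ≤ q → q ≤ m → μ j ≤ pref (v j) q - pref (v j) p → Qj ≤ q) := by
        intro j hj
        exact canPack_step (fun e => hpos j e) (hpack j hj)
      choose Qf hQ1 hQ2 hQ3 hQ4 hQ5 using hQex
      obtain ⟨j₀, hj₀S, hj₀min⟩ := S.exists_min_image (fun j => if h : j ∈ S then Qf j h else 0) hS
      set Q := Qf j₀ hj₀S with hQdef
      have hj₀min' : ∀ j (hj : j ∈ S), Q ≤ Qf j hj := by
        intro j hj
        have := hj₀min j hj
        simp only [dif_pos hj, dif_pos hj₀S] at this
        exact this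
      have hScard : 1 ≤ S.card := Finset.card_pos.mpr ⟨j₀, hj₀S⟩
      by_cases hPlow : ∃ pr ∈ P, ((pr.2 : Fin m) : ℕ) < Q
      · -- serve the owner of the leftmost reserved item
        obtain ⟨prw, hprw, hprwlt⟩ := hPlow
        have hPne : P.Nonempty := ⟨prw, hprw⟩
        obtain ⟨pr₀, hpr₀P, hpr₀min⟩ :=
          P.exists_min_image (fun pr => ((pr.2 : Fin m) : ℕ)) hPne
        have he₀lt : ((pr₀.2 : Fin m) : ℕ) < Q := lt_of_le_of_lt (hpr₀min prw hprw) hprwlt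
        set q : ℕ := ((pr₀.2 : Fin m) : ℕ) + 1 with hqdef
        have hpq : p ≤ q := le_trans (hitems pr₀ hpr₀P) (Nat.le_succ _)
        have hqm : q ≤ m := (pr₀.2 : Fin m).isLt
        have hPcard : 1 ≤ P.card := Finset.card_pos.mpr ⟨pr₀, hpr₀P⟩
        have hqQ : q ≤ Q := he₀lt
        obtain ⟨B, hb1, hb2, hb3, hb4, hb5, hb6, hb7, hb8⟩ :=
          assemble pr₀.1 q S (P.erase pr₀) hpq hqm (hSP pr₀ hpr₀P)
            (by
              intro pr hpr
              exact (hdist pr (Finset.mem_of_mem_erase hpr) pr₀ hpr₀P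
                (Finset.ne_of_mem_erase hpr)).1)
            (by rw [Finset.card_erase_of_mem hpr₀P]; omega)
            (fun pr hpr => hSP pr (Finset.mem_of_mem_erase hpr))
            (fun pr hpr pr' hpr' hne => hdist pr (Finset.mem_of_mem_erase hpr)
              pr' (Finset.mem_of_mem_erase hpr') hne)
            (by
              intro pr hpr
              have h1 := hpr₀min pr (Finset.mem_of_mem_erase hpr)
              have h2 : pr.2 ≠ pr₀.2 :=
                (hdist pr (Finset.mem_of_mem_erase hpr) pr₀ hpr₀P
                  (Finset.ne_of_mem_erase hpr)).2
              have h3 : ((pr.2 : Fin m) : ℕ) ≠ ((pr₀.2 : Fin m) : ℕ) :=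
                fun h => h2 (Fin.ext h)
              omega)
            (by
              intro j hj
              exact hQ4 j hj q (le_trans hqQ (hj₀min' j hj)))
        refine ⟨B, hb1, hb2, hb3, hb4, hb5, ?_, ?_⟩
        · intro pr hpr
          rcases eq_or_ne pr pr₀ with rfl | hne
          · rw [hb7, mem_iv]
            exact ⟨hitems pr hpr, by omega⟩
          · exact hb6 pr (Finset.mem_erase.mpr ⟨hne, hpr⟩)
        · intro i hiS hiP
          rcases eq_or_ne i pr₀.1 with rfl | hne
          · exact absurd rfl (hiP pr₀ hpr₀P)
          · refine hb8 i hne hiS ?_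
            intro pr hpr
            exact hiP pr (Finset.mem_of_mem_erase hpr)
      · -- serve agent j₀ its minimal first block [p, Q)
        push_neg at hPlow
        obtain ⟨B, hb1, hb2, hb3, hb4, hb5, hb6, hb7, hb8⟩ :=
          assemble j₀ Q (S.erase j₀) P (hQ1 j₀ hj₀S) (hQ2 j₀ hj₀S)
            (Finset.notMem_erase j₀ S)
            (fun pr hpr => fun h => hSP pr hpr (h ▸ hj₀S))
            (by rw [Finset.card_erase_of_mem hj₀S]; omega)
            (fun pr hpr h => hSP pr hpr (Finset.mem_of_mem_erase h))
            hdist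
            (fun pr hpr => hPlow pr hpr)
            (by
              intro j hj
              exact hQ4 j (Finset.mem_of_mem_erase hj)
                Q (hj₀min' j (Finset.mem_of_mem_erase hj)))
        refine ⟨B, hb1, hb2, hb3, hb4, ?_, hb6, ?_⟩
        · intro j hj
          rcases eq_or_ne j j₀ with rfl | hne
          · rw [hb7, bundleVal_iv _ (hQ1 j hj₀S)]
            exact hQ3 j hj₀S
          · exact hb5 j (Finset.mem_erase.mpr ⟨hne, hj⟩)
        · intro i hiS hiP
          rcases eq_or_ne i j₀ with rfl | hne
          · exact absurd hj₀S hiS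
          · refine hb8 i hne ?_ hiP
            intro h
            exact hiS (Finset.mem_of_mem_erase h)
    · -- S empty: serve the owner of the leftmost reserved item
      rw [Finset.not_nonempty_iff_eq_empty] at hS
      subst hS
      have hPne : P.Nonempty := Finset.card_pos.mp (by simp at hcard; omega)
      obtain ⟨pr₀, hpr₀P, hpr₀min⟩ :=
        P.exists_min_image (fun pr => ((pr.2 : Fin m) : ℕ)) hPne
      set q : ℕ := ((pr₀.2 : Fin m) : ℕ) + 1 with hqdef
      have hpq : p ≤ q := le_trans (hitems pr₀ hpr₀P) (Nat.le_succ _)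
      have hqm : q ≤ m := (pr₀.2 : Fin m).isLt
      obtain ⟨B, hb1, hb2, hb3, hb4, hb5, hb6, hb7, hb8⟩ :=
        assemble pr₀.1 q ∅ (P.erase pr₀) hpq hqm (Finset.notMem_empty _)
          (by
            intro pr hpr
            exact (hdist pr (Finset.mem_of_mem_erase hpr) pr₀ hpr₀P
              (Finset.ne_of_mem_erase hpr)).1)
          (by rw [Finset.card_erase_of_mem hpr₀P]; simp at hcard ⊢; omega)
          (fun pr _ => Finset.notMem_empty _)
          (fun pr hpr pr' hpr' hne => hdist pr (Finset.mem_of_mem_erase hpr)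
            pr' (Finset.mem_of_mem_erase hpr') hne)
          (by
            intro pr hpr
            have h1 := hpr₀min pr (Finset.mem_of_mem_erase hpr)
            have h2 : pr.2 ≠ pr₀.2 :=
              (hdist pr (Finset.mem_of_mem_erase hpr) pr₀ hpr₀P
                (Finset.ne_of_mem_erase hpr)).2
            have h3 : ((pr.2 : Fin m) : ℕ) ≠ ((pr₀.2 : Fin m) : ℕ) :=
              fun h => h2 (Fin.ext h)
            omega)
          (fun j hj => absurd hj (Finset.notMem_empty _))
      refine ⟨B, hb1, hb2, hb3, hb4, fun j hj => absurd hj (Finset.notMem_empty _), ?_, ?_⟩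
      · intro pr hpr
        rcases eq_or_ne pr pr₀ with rfl | hne
        · rw [hb7, mem_iv]
          exact ⟨hitems pr hpr, by omega⟩
        · exact hb6 pr (Finset.mem_erase.mpr ⟨hne, hpr⟩)
      · intro i hiS hiP
        rcases eq_or_ne i pr₀.1 with rfl | hne
        · exact absurd rfl (hiP pr₀ hpr₀P)
        · refine hb8 i hne (Finset.notMem_empty _) ?_
          intro pr hpr
          exact hiP pr (Finset.mem_of_mem_erase hpr)

end GoodsAux

namespace GoodsAux

open Classical

variable {n m : ℕ}

/-- valid reserved-pair selections: qualified pairs, distinct agents, distinct items -/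
def validSel (v : Fin n → Fin m → ℝ) (μ : Fin n → ℝ) (P : Finset (Fin n × Fin m)) : Prop :=
  (∀ pr ∈ P, μ pr.1 ≤ v pr.1 pr.2) ∧
  (∀ pr ∈ P, ∀ pr' ∈ P, pr ≠ pr' → pr.1 ≠ pr'.1 ∧ pr.2 ≠ pr'.2)

noncomputable def selW (v : Fin n → Fin m → ℝ) (P : Finset (Fin n × Fin m)) : ℝ :=
  ∑ pr ∈ P, v pr.1 pr.2

lemma exists_max_sel (v : Fin n → Fin m → ℝ) (μ : Fin n → ℝ) :
    ∃ M : Finset (Fin n × Fin m), validSel v μ M ∧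
      ∀ P : Finset (Fin n × Fin m), validSel v μ P → selW v P ≤ selW v M := by
  classical
  have hne : ((Finset.univ : Finset (Finset (Fin n × Fin m))).filter
      (fun P => validSel v μ P)).Nonempty := by
    refine ⟨∅, ?_⟩
    simp only [Finset.mem_filter, Finset.mem_univ, true_and]
    exact ⟨fun pr hpr => absurd hpr (Finset.notMem_empty _),
      fun pr hpr => absurd hpr (Finset.notMem_empty _)⟩
  obtain ⟨M, hM, hmax⟩ := Finset.exists_max_image _ (fun P => selW v P) hne
  simp only [Finset.mem_filter, Finset.mem_univ, true_and] at hM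
  refine ⟨M, hM, fun P hP => ?_⟩
  exact hmax P (by simp only [Finset.mem_filter, Finset.mem_univ, true_and]; exact hP)

section SwapBounds

variable (v : Fin n → Fin m → ℝ) (μ : Fin n → ℝ) (M : Finset (Fin n × Fin m))

/-- amount paid to agent l in selection M -/
noncomputable def payA (l : Fin n) : ℝ :=
  ∑ pr ∈ M.filter (fun pr => pr.1 = l), v pr.1 pr.2

/-- amount carried by item e in selection M -/
noncomputable def payI (e : Fin m) : ℝ :=
  ∑ pr ∈ M.filter (fun pr => pr.2 = e), v pr.1 pr.2

variable (hpos : ∀ i e, 0 ≤ v i e) (hμ0 : ∀ i, 0 ≤ μ i)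

include hpos in
lemma payA_nonneg (l : Fin n) : 0 ≤ payA v M l :=
  Finset.sum_nonneg (fun pr _ => hpos pr.1 pr.2)

include hpos in
lemma payI_nonneg (e : Fin m) : 0 ≤ payI v M e :=
  Finset.sum_nonneg (fun pr _ => hpos pr.1 pr.2)

lemma sum_payA : ∑ l, payA v M l = selW v M := by
  classical
  unfold payA selW
  exact Finset.sum_fiberwise M (fun pr => pr.1) (fun pr => v pr.1 pr.2)

include hpos in
lemma sum_payI_le {T : Finset (Fin m)} : ∑ e ∈ T, payI v M e ≤ selW v M := by
  classical
  have h1 : ∑ e ∈ T, payI v M e ≤ ∑ e, payI v M e :=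
    Finset.sum_le_sum_of_subset_of_nonneg (Finset.subset_univ T)
      (fun e _ _ => payI_nonneg v M hpos e)
  have h2 : ∑ e, payI v M e = selW v M := by
    unfold payI selW
    exact Finset.sum_fiberwise M (fun pr => pr.2) (fun pr => v pr.1 pr.2)
  linarith

include hpos hμ0 in
/-- THE swap bound: any pair's value is controlled by its agent's pay, its item's pay,
and the agent's fair share. -/
lemma pair_bound (hval : validSel v μ M)
    (hmax : ∀ P : Finset (Fin n × Fin m), validSel v μ P → selW v P ≤ selW v M)
    (l : Fin n) (e : Fin m) :
    v l e ≤ μ l + payA v M l + payI v M e := by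
  classical
  by_cases hq : μ l ≤ v l e
  · -- swap: remove all pairs touching l or e, insert (l, e)
    set Mf := M.filter (fun pr => pr.1 ≠ l ∧ pr.2 ≠ e) with hMf
    set M' := insert (l, e) Mf with hM'
    have hnotin : (l, e) ∉ Mf := by
      intro h
      rw [hMf, Finset.mem_filter] at h
      exact h.2.1 rfl
    have hvalid' : validSel v μ M' := by
      constructor
      · intro pr hpr
        rcases Finset.mem_insert.mp hpr with rfl | h
        · exact hq
        · exact hval.1 pr (Finset.mem_of_mem_filter pr h)
      · intro pr hpr pr' hpr' hne
        rcases Finset.mem_insert.mp hpr with rfl | h <;>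
          rcases Finset.mem_insert.mp hpr' with h' | h'
        · exact absurd h'.symm hne
        · have := (Finset.mem_filter.mp h').2
          exact ⟨Ne.symm this.1, Ne.symm this.2⟩
        · subst h'
          exact (Finset.mem_filter.mp h).2
        · exact hval.2 pr (Finset.mem_of_mem_filter pr h)
            pr' (Finset.mem_of_mem_filter pr' h') hne
    have hW' : selW v M' = v l e + selW v Mf := by
      rw [hM']
      unfold selW
      rw [Finset.sum_insert hnotin]
    -- the removed pairs are worth at most payA l + payI e
    have hsplit : selW v M = selW v Mf +
        ∑ pr ∈ M.filter (fun pr => ¬(pr.1 ≠ l ∧ pr.2 ≠ e)), v pr.1 pr.2 := by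
      unfold selW
      rw [hMf]
      exact (Finset.sum_filter_add_sum_filter_not M _ _).symm
    have hrem : ∑ pr ∈ M.filter (fun pr => ¬(pr.1 ≠ l ∧ pr.2 ≠ e)), v pr.1 pr.2 ≤
        payA v M l + payI v M e := by
      have hsub : M.filter (fun pr => ¬(pr.1 ≠ l ∧ pr.2 ≠ e)) ⊆
          M.filter (fun pr => pr.1 = l) ∪ M.filter (fun pr => pr.2 = e) := by
        intro pr hpr
        rw [Finset.mem_filter] at hpr
        rw [Finset.mem_union, Finset.mem_filter, Finset.mem_filter]
        push_neg at hpr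
        rcases Classical.em (pr.1 = l) with h | h
        · exact Or.inl ⟨hpr.1, h⟩
        · exact Or.inr ⟨hpr.1, hpr.2 h⟩
      have h1 : ∑ pr ∈ M.filter (fun pr => ¬(pr.1 ≠ l ∧ pr.2 ≠ e)), v pr.1 pr.2 ≤
          ∑ pr ∈ M.filter (fun pr => pr.1 = l) ∪ M.filter (fun pr => pr.2 = e),
            v pr.1 pr.2 :=
        Finset.sum_le_sum_of_subset_of_nonneg hsub (fun pr _ _ => hpos pr.1 pr.2)
      have h2 : ∑ pr ∈ M.filter (fun pr => pr.1 = l) ∪ M.filter (fun pr => pr.2 = e),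
            v pr.1 pr.2 +
          ∑ pr ∈ M.filter (fun pr => pr.1 = l) ∩ M.filter (fun pr => pr.2 = e),
            v pr.1 pr.2 =
          payA v M l + payI v M e := by
        unfold payA payI
        exact Finset.sum_union_inter
      have h3 : 0 ≤ ∑ pr ∈ M.filter (fun pr => pr.1 = l) ∩
          M.filter (fun pr => pr.2 = e), v pr.1 pr.2 :=
        Finset.sum_nonneg (fun pr _ => hpos pr.1 pr.2)
      linarith
    have := hmax M' hvalid'
    rw [hW'] at this
    linarith [hμ0 l]
  · push_neg at hq
    have := payA_nonneg v M hpos l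
    have := payI_nonneg v M hpos e
    linarith

include hpos hμ0 in
lemma topSum_bound (hval : validSel v μ M)
    (hmax : ∀ P : Finset (Fin n × Fin m), validSel v μ P → selW v P ≤ selW v M)
    (hn : 1 ≤ n) (l : Fin n) :
    topSum (v l) (n - 1) ≤ ((n : ℝ) - 1) * (μ l + payA v M l) + selW v M := by
  classical
  obtain ⟨T, hTc, hT⟩ := topSum_attained (v l) (n - 1)
  rw [hT]
  have h1 : bundleVal (v l) T ≤ ∑ e ∈ T, (μ l + payA v M l + payI v M e) := by
    unfold bundleVal
    exact Finset.sum_le_sum (fun e _ => pair_bound v μ M hpos hμ0 hval hmax l e)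
  have h2 : ∑ e ∈ T, (μ l + payA v M l + payI v M e) =
      T.card * (μ l + payA v M l) + ∑ e ∈ T, payI v M e := by
    rw [Finset.sum_add_distrib, Finset.sum_const, nsmul_eq_mul]
  have h3 : (T.card : ℝ) * (μ l + payA v M l) ≤ ((n : ℝ) - 1) * (μ l + payA v M l) := by
    have hcast : (T.card : ℝ) ≤ (n : ℝ) - 1 := by
      have : (T.card : ℝ) ≤ ((n - 1 : ℕ) : ℝ) := by exact_mod_cast hTc
      have : ((n - 1 : ℕ) : ℝ) = (n : ℝ) - 1 := by
        have := Nat.cast_sub hn (R := ℝ)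
        simpa using this
      linarith [this ▸ (by exact_mod_cast hTc : (T.card : ℝ) ≤ ((n - 1 : ℕ) : ℝ))]
    have hnn : 0 ≤ μ l + payA v M l := by
      have := payA_nonneg v M hpos l
      have := hμ0 l
      linarith
    exact mul_le_mul_of_nonneg_right hcast hnn
  have h4 := sum_payI_le v M hpos (T := T)
  linarith

end SwapBounds

end GoodsAux


/-- For every fair-goods instance with `n ≥ 1` agents, there exists a
connected allocation that is MMS fair and has utilitarian welfare at least `1/4`. -/
theorem goods_utilitarian_mms_exists (n m : ℕ) (hn : 1 ≤ n)
    (v : Fin n → Fin m → ℝ)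
    (hpos : ∀ i j, 0 ≤ v i j)
    (hnorm : ∀ i, bundleVal (v i) Finset.univ = 1) :
    ∃ A : Fin n → Finset (Fin m), ConnAlloc n m A ∧
      (∀ i, mmsVal n m (v i) ≤ bundleVal (v i) (A i)) ∧
      (1 / 4 : ℝ) ≤ utilW n m v A := by
  classical
  open GoodsAux in
  set μ : Fin n → ℝ := fun i => mmsVal n m (v i) with hμdef
  have hμ0 : ∀ i, 0 ≤ μ i := fun i => mmsVal_nonneg n m hn (v i) (hpos i)
  obtain ⟨M, hMval, hMmax⟩ := exists_max_sel v μ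
  set V : ℝ := selW v M with hVdef
  have hV0 : 0 ≤ V := Finset.sum_nonneg (fun pr _ => hpos pr.1 pr.2)
  -- global inequality:  n ≤ (2n-1) (Σ μ) + (2n-1) V
  have hkey : ∀ i, (1 : ℝ) ≤ ((n : ℝ) - 1) * (μ i + payA v M i) + V + (n : ℝ) * μ i := by
    intro i
    have h1 := one_le_topSum_add_mms n m hn (v i) (hpos i) (hnorm i)
    have h2 := topSum_bound v μ M hpos hμ0 hMval hMmax hn i
    simp only [hμdef] at *
    linarith
  have hglobal : (n : ℝ) ≤ (2 * n - 1) * (∑ i, μ i) + (2 * n - 1) * V := by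
    have hsum := Finset.sum_le_sum (fun i (_ : i ∈ Finset.univ) => hkey i)
    rw [Finset.sum_const, Finset.card_univ, Fintype.card_fin] at hsum
    have hpa : ∑ i, payA v M i = V := sum_payA v M
    have hexp : ∑ i, (((n : ℝ) - 1) * (μ i + payA v M i) + V + (n : ℝ) * μ i) =
        ((n : ℝ) - 1) * (∑ i, μ i) + ((n : ℝ) - 1) * (∑ i, payA v M i) +
          (n : ℝ) * V + (n : ℝ) * (∑ i, μ i) := by
      simp only [mul_add]
      rw [Finset.sum_add_distrib, Finset.sum_add_distrib, Finset.sum_add_distrib,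
        Finset.sum_const, Finset.card_univ, Fintype.card_fin, nsmul_eq_mul,
        ← Finset.mul_sum, ← Finset.mul_sum, ← Finset.mul_sum]
    rw [hexp, hpa] at hsum
    simp only [nsmul_eq_mul, mul_one] at hsum
    nlinarith [hsum]
  -- build the allocation
  set I : Finset (Fin n) := M.image Prod.fst with hIdef
  have hinj : Set.InjOn Prod.fst (M : Set (Fin n × Fin m)) := by
    intro pr hpr pr' hpr' heq
    by_contra hne
    exact (hMval.2 pr hpr pr' hpr' hne).1 heq
  have hIcard : I.card = M.card := Finset.card_image_of_injOn hinj
  set S : Finset (Fin n) := Finset.univ \ I with hSdef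
  have hIsub : I ⊆ Finset.univ := Finset.subset_univ I
  have hScard : S.card + M.card = n := by
    rw [hSdef, Finset.card_sdiff_of_subset hIsub, Finset.card_univ, Fintype.card_fin, hIcard]
    have : M.card ≤ n := by
      rw [← hIcard]
      calc I.card ≤ Finset.univ.card := Finset.card_le_card hIsub
      _ = n := by rw [Finset.card_univ, Fintype.card_fin]
    omega
  have hcardN : S.card + M.card = (n - 1) + 1 := by omega
  have hn1 : n - 1 + 1 = n := by omega
  obtain ⟨B, hb1, hb2, hb3, hb4, hb5, hb6, hb7⟩ :=
    feed v hpos μ (n - 1) S M 0 hcardN (Nat.zero_le m)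
      (by
        intro pr hpr
        rw [hSdef]
        simp only [Finset.mem_sdiff, Finset.mem_univ, true_and, not_not]
        exact Finset.mem_image_of_mem Prod.fst hpr)
      hMval.2
      (fun pr _ => Nat.zero_le _)
      (by
        intro j _
        rw [hn1]
        exact canPack_mms n m hn (v j) (hpos j))
  have hconn : ConnAlloc n m B :=
    ⟨hb1, hb2, fun e => hb4 e (Nat.zero_le _)⟩
  have hmms : ∀ i, mmsVal n m (v i) ≤ bundleVal (v i) (B i) := by
    intro i
    by_cases hiS : i ∈ S
    · exact hb5 i hiS
    · have hiI : i ∈ I := by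
        rw [hSdef] at hiS
        simp only [Finset.mem_sdiff, Finset.mem_univ, true_and, not_not] at hiS
        exact hiS
      rw [hIdef] at hiI
      obtain ⟨pr, hprM, hpr1⟩ := Finset.mem_image.mp hiI
      have h1 : μ pr.1 ≤ v pr.1 pr.2 := hMval.1 pr hprM
      have h2 : pr.2 ∈ B pr.1 := hb6 pr hprM
      have h3 : v pr.1 pr.2 ≤ bundleVal (v pr.1) (B pr.1) :=
        single_le_bundleVal (fun e => hpos pr.1 e) h2
      rw [← hpr1]
      exact le_trans h1 h3
  refine ⟨B, hconn, hmms, ?_⟩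
  -- welfare bound
  have hW1 : ∑ i ∈ S, μ i ≤ ∑ i ∈ S, bundleVal (v i) (B i) :=
    Finset.sum_le_sum (fun i hi => hb5 i hi)
  have hW2 : V ≤ ∑ i ∈ I, bundleVal (v i) (B i) := by
    rw [hVdef, hIdef, Finset.sum_image (fun pr hpr pr' hpr' h => hinj hpr hpr' h)]
    unfold GoodsAux.selW
    refine Finset.sum_le_sum (fun pr hpr => ?_)
    exact single_le_bundleVal (fun e => hpos pr.1 e) (hb6 pr hpr)
  have hsplit : utilW n m v B = (∑ i ∈ S, bundleVal (v i) (B i)) +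
      (∑ i ∈ I, bundleVal (v i) (B i)) := by
    unfold utilW
    rw [hSdef]
    exact (Finset.sum_sdiff hIsub).symm
  have hμI : ∑ i ∈ I, μ i ≤ V := by
    rw [hIdef, Finset.sum_image (fun pr hpr pr' hpr' h => hinj hpr hpr' h), hVdef]
    unfold selW
    exact Finset.sum_le_sum (fun pr hpr => hMval.1 pr hpr)
  have hμsplit : ∑ i, μ i = (∑ i ∈ S, μ i) + (∑ i ∈ I, μ i) := by
    rw [hSdef]
    exact (Finset.sum_sdiff hIsub).symm
  -- numerical conclusion
  have hSμ0 : 0 ≤ ∑ i ∈ S, μ i := Finset.sum_nonneg (fun i _ => hμ0 i)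
  have hX : (n : ℝ) ≤ 2 * (2 * n - 1) * ((∑ i ∈ S, μ i) + V) := by
    have h := hglobal
    rw [hμsplit] at h
    have hfac : (0 : ℝ) ≤ 2 * n - 1 := by
      have : (1 : ℝ) ≤ (n : ℝ) := by exact_mod_cast hn
      linarith
    nlinarith [hμI, hV0, hSμ0, h, hfac]
  have hfinal : (1 / 4 : ℝ) ≤ (∑ i ∈ S, μ i) + V := by
    have hcast : (1 : ℝ) ≤ (n : ℝ) := by exact_mod_cast hn
    nlinarith [hX, hSμ0, hV0, hcast]
  calc (1 / 4 : ℝ) ≤ (∑ i ∈ S, μ i) + V := hfinal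
  _ ≤ (∑ i ∈ S, bundleVal (v i) (B i)) + (∑ i ∈ I, bundleVal (v i) (B i)) := by
      linarith
  _ = utilW n m v B := hsplit.symm
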